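/- arXiv:2001.03746 — 4 statements merged into one kernel-verified Lean document; each statement's English description precedes it below -/
import Mathlib

section
/- Every morphism of parasimplices has a left adjoint which is again a morphism of parasimplices: if f : ℤ → ℤ is monotone with f(x + (k+1)) = f(x) + (n+1) for all x, then the map lf : ℤ → ℤ defined by lf(μ) = min { λ ∈ ℤ : μ ≤ f(λ) } is well-defined, monotone, satisfies lf(μ + (n+1)) = lf(μ) + (k+1) for all μ, and satisfies the adjunction property lf(μ) ≤ λ ↔ μ ≤ f(λ) for all μ, λ ∈ ℤ. -/
/-- Every morphism of parasimplices has a left adjoint which is again a morphism of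
parasimplices. -/
theorem parasimplex_left_adjoint (n k : ℕ) (f : ℤ → ℤ) (hmono : Monotone f)
    (heq : ∀ x : ℤ, f (x + ((k : ℤ) + 1)) = f x + ((n : ℤ) + 1)) :
    ∃ lf : ℤ → ℤ,
      (∀ μ : ℤ, IsLeast {l : ℤ | μ ≤ f l} (lf μ)) ∧
      Monotone lf ∧
      (∀ μ : ℤ, lf (μ + ((n : ℤ) + 1)) = lf μ + ((k : ℤ) + 1)) ∧
      (∀ μ l : ℤ, lf μ ≤ l ↔ μ ≤ f l) := by
  -- iterated equivariance
  have heqm : ∀ (x : ℤ) (m : ℤ), f (x + m * ((k : ℤ) + 1)) = f x + m * ((n : ℤ) + 1) := by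
    intro x m
    induction m using Int.induction_on with
    | zero => simp
    | succ i ih =>
        have : x + ((i : ℤ) + 1) * ((k : ℤ) + 1)
            = (x + (i : ℤ) * ((k : ℤ) + 1)) + ((k : ℤ) + 1) := by ring
        rw [this, heq, ih]; ring
    | pred i ih =>
        have h := heq (x + (-(i : ℤ) - 1) * ((k : ℤ) + 1))
        have e1 : x + (-(i : ℤ) - 1) * ((k : ℤ) + 1) + ((k : ℤ) + 1)
            = x + (-(i : ℤ)) * ((k : ℤ) + 1) := by ring
        rw [e1, ih] at h
        linarith
  have hleast : ∀ μ : ℤ, ∃ l : ℤ, IsLeast {l : ℤ | μ ≤ f l} l := by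
    intro μ
    have hne : ∃ l : ℤ, μ ≤ f l := by
      refine ⟨(max 0 (μ - f 0)) * ((k : ℤ) + 1), ?_⟩
      have h := heqm 0 (max 0 (μ - f 0))
      simp only [zero_add] at h
      rw [h]
      nlinarith [le_max_left 0 (μ - f 0), le_max_right 0 (μ - f 0), Int.ofNat_nonneg n]
    have hbdd : ∃ b : ℤ, ∀ l ∈ {l : ℤ | μ ≤ f l}, b ≤ l := by
      set m : ℤ := max 0 (f 0 - μ + 1) with hm
      refine ⟨-m * ((k : ℤ) + 1), fun l hl => ?_⟩
      by_contra hlt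
      push_neg at hlt
      have h1 : f l ≤ f (-m * ((k : ℤ) + 1)) := hmono hlt.le
      have h2 := heqm 0 (-m)
      simp only [zero_add] at h2
      rw [h2] at h1
      have hm0 : 0 ≤ m := le_max_left _ _
      have hm1 : f 0 - μ + 1 ≤ m := le_max_right _ _
      have : μ ≤ f l := hl
      nlinarith [Int.ofNat_nonneg n]
    obtain ⟨l, hl1, hl2⟩ := Int.exists_least_of_bdd hbdd hne
    exact ⟨l, hl1, hl2⟩
  choose lf hlf using hleast
  have hadj : ∀ μ l : ℤ, lf μ ≤ l ↔ μ ≤ f l := by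
    intro μ l
    constructor
    · intro h; exact le_trans (hlf μ).1 (hmono h)
    · intro h; exact (hlf μ).2 h
  refine ⟨lf, hlf, ?_, ?_, hadj⟩
  · intro μ μ' h
    exact (hadj μ _).2 (le_trans h (hlf μ').1)
  · intro μ
    apply le_antisymm
    · rw [hadj]
      rw [heq]
      have h2 := (hlf μ).1
      simp only [Set.mem_setOf_eq] at h2
      linarith
    · have : lf μ ≤ lf (μ + ((n : ℤ) + 1)) - ((k : ℤ) + 1) := by
        rw [hadj]
        have h := heq (lf (μ + ((n : ℤ) + 1)) - ((k : ℤ) + 1))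
        have e : lf (μ + ((n : ℤ) + 1)) - ((k : ℤ) + 1) + ((k : ℤ) + 1)
            = lf (μ + ((n : ℤ) + 1)) := by ring
        rw [e] at h
        have h2 := (hlf (μ + ((n : ℤ) + 1))).1
        simp only [Set.mem_setOf_eq] at h2
        linarith
      linarith
end

section
/- The left and right adjoints of a parasimplex morphism are related by the paracyclic translation: for every monotone f : ℤ → ℤ with f(x + (k+1)) = f(x) + (n+1), and with lf(μ) = min { λ : μ ≤ f(λ) } and rf(μ) = max { λ : f(λ) ≤ μ }, one has lf(μ + 1) - 1 = rf(μ) for all μ ∈ ℤ; equivalently t ∘ rf = lf ∘ t where t(x) = x + 1. -/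
/-- The left and right adjoints of a parasimplex morphism are related by the paracyclic
translation: `lf (μ + 1) - 1 = rf μ`, equivalently `t ∘ rf = lf ∘ t`. -/
theorem adjoints_related_by_translation (n k : ℕ) (f lf rf : ℤ → ℤ) (hmono : Monotone f)
    (heq : ∀ x : ℤ, f (x + ((k : ℤ) + 1)) = f x + ((n : ℤ) + 1))
    (hlf : ∀ μ : ℤ, IsLeast {l : ℤ | μ ≤ f l} (lf μ))
    (hrf : ∀ μ : ℤ, IsGreatest {l : ℤ | f l ≤ μ} (rf μ)) :
    (∀ μ : ℤ, lf (μ + 1) - 1 = rf μ) ∧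
    (fun x => rf x + 1) = (fun x => lf (x + 1)) := by
  have key : ∀ μ : ℤ, lf (μ + 1) - 1 = rf μ := by
    intro μ
    obtain ⟨hl1, hl2⟩ := hlf (μ + 1)
    obtain ⟨hr1, hr2⟩ := hrf μ
    simp only [Set.mem_setOf_eq, lowerBounds, upperBounds] at *
    apply le_antisymm
    · apply hr2
      by_contra h
      push_neg at h
      have := hl2 (show μ + 1 ≤ f (lf (μ + 1) - 1) by omega)
      omega
    · by_contra h
      push_neg at h
      have : μ + 1 ≤ f (rf μ) := le_trans hl1 (hmono (by omega))
      omega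
  exact ⟨key, funext fun x => by have := key x; omega⟩
end

section
/- Decomposition of parasimplex morphisms via shifts of simplex maps: for every monotone f : ℤ → ℤ with f(x + (k+1)) = f(x) + (n+1) for all x, there exist a unique integer l and a unique monotone g : ℤ → ℤ with g(x + (k+1)) = g(x) + (n+1), satisfying 0 ≤ g(0) ≤ g(k) ≤ n, such that f(x) = g(x + l) for all x ∈ ℤ. -/
/-- Every parasimplex morphism decomposes uniquely as a shift of a morphism coming from
the simplex category (i.e. one with `0 ≤ g 0 ≤ g k ≤ n`). -/
theorem parasimplex_shift_decomposition (n k : ℕ) (f : ℤ → ℤ) (hmono : Monotone f)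
    (heq : ∀ x : ℤ, f (x + ((k : ℤ) + 1)) = f x + ((n : ℤ) + 1)) :
    ∃! p : ℤ × (ℤ → ℤ),
      Monotone p.2 ∧ (∀ x : ℤ, p.2 (x + ((k : ℤ) + 1)) = p.2 x + ((n : ℤ) + 1)) ∧
      0 ≤ p.2 0 ∧ p.2 0 ≤ p.2 (k : ℤ) ∧ p.2 (k : ℤ) ≤ (n : ℤ) ∧
      ∀ x : ℤ, f x = p.2 (x + p.1) := by
  -- iterate the periodicity
  have hiter : ∀ (j : ℕ) (x : ℤ), f (x + j * ((k : ℤ) + 1)) = f x + j * ((n : ℤ) + 1) := by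
    intro j
    induction j with
    | zero => intro x; simp
    | succ j ih =>
        intro x
        have := heq (x + j * ((k : ℤ) + 1))
        rw [ih] at this
        have harg : x + (j + 1 : ℕ) * ((k : ℤ) + 1)
            = x + j * ((k : ℤ) + 1) + ((k : ℤ) + 1) := by push_cast; ring
        rw [harg, this]
        push_cast; ring
  -- the set {m | 0 ≤ f m} is nonempty
  have hinh : ∃ m : ℤ, 0 ≤ f m := by
    refine ⟨((-f 0).toNat : ℤ) * ((k : ℤ) + 1), ?_⟩
    rw [show (((-f 0).toNat : ℤ) * ((k : ℤ) + 1)) = 0 + ((-f 0).toNat : ℤ) * ((k : ℤ) + 1)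
      by ring, hiter]
    have h1 : ((-f 0).toNat : ℤ) * 1 ≤ ((-f 0).toNat : ℤ) * ((n : ℤ) + 1) := by
      apply mul_le_mul_of_nonneg_left _ (Int.natCast_nonneg _)
      omega
    have h2 : -f 0 ≤ ((-f 0).toNat : ℤ) := Int.self_le_toNat _
    omega
  -- and bounded below
  have hbdd : ∃ b : ℤ, ∀ m : ℤ, 0 ≤ f m → b ≤ m := by
    set j : ℕ := (f 0 + 1).toNat with hj
    refine ⟨-(j : ℤ) * ((k : ℤ) + 1) + 1, ?_⟩
    intro m hm
    by_contra hcon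
    push_neg at hcon
    have hle : m ≤ -(j : ℤ) * ((k : ℤ) + 1) := by omega
    have hval : f (-(j : ℤ) * ((k : ℤ) + 1)) < 0 := by
      have := hiter j (-(j : ℤ) * ((k : ℤ) + 1))
      have harg : -(j : ℤ) * ((k : ℤ) + 1) + (j : ℤ) * ((k : ℤ) + 1) = 0 := by ring
      rw [harg] at this
      have h1 : (j : ℤ) * 1 ≤ (j : ℤ) * ((n : ℤ) + 1) := by
        apply mul_le_mul_of_nonneg_left _ (Int.natCast_nonneg _); omega
      have h2 : f 0 + 1 ≤ (j : ℤ) := Int.self_le_toNat _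
      omega
    have := hmono hle
    omega
  obtain ⟨m, hm0, hmle⟩ := Int.exists_least_of_bdd hbdd hinh
  -- f (m - 1) < 0
  have hmneg : f (m - 1) < 0 := by
    by_contra h
    push_neg at h
    have := hmle _ h
    omega
  refine ⟨(-m, fun x => f (x + m)), ⟨?_, ?_, ?_, ?_, ?_, ?_⟩, ?_⟩
  · exact fun a b hab => hmono (by omega)
  · intro x
    simp only []
    rw [show x + ((k : ℤ) + 1) + m = x + m + ((k : ℤ) + 1) by ring, heq]
  · simpa using hm0
  · exact hmono (by omega)
  · have := heq (m - 1)
    have h2 := hmono (show m - 1 ≤ m - 1 from le_refl _)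
    have harg : m - 1 + ((k : ℤ) + 1) = (k : ℤ) + m := by ring
    rw [harg] at this
    simp only []
    omega
  · intro x; simp
  · rintro ⟨l, g⟩ ⟨hg1, hg2, hg3, hg4, hg5, hg6⟩
    simp only [] at hg1 hg2 hg3 hg4 hg5 hg6
    -- g x = f (x - l)
    have hgval : ∀ x : ℤ, g x = f (x - l) := by
      intro x
      have := hg6 (x - l)
      rw [show x - l + l = x by ring] at this
      omega
    have h0 : 0 ≤ f (-l) := by rw [hgval 0] at hg3; simpa using hg3
    have hk : f ((k : ℤ) - l) ≤ (n : ℤ) := by rw [hgval] at hg5; exact hg5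
    have hml : m ≤ -l := hmle _ h0
    have heql : -l = m := by
      by_contra hne
      have hlt : m + 1 ≤ -l := by omega
      have harg : f (m - 1 + ((k : ℤ) + 1)) = f (m - 1) + ((n : ℤ) + 1) := heq (m - 1)
      have hmono' : f (m - 1 + ((k : ℤ) + 1)) ≤ f ((k : ℤ) - l) := hmono (by omega)
      have hmono'' : f m ≤ f (-l - 1) := hmono (by omega)
      have harg2 : f (-l - 1 + ((k : ℤ) + 1)) = f (-l - 1) + ((n : ℤ) + 1) := heq (-l - 1)
      have hmono3 : f (-l - 1 + ((k : ℤ) + 1)) ≤ f ((k : ℤ) - l) := hmono (by omega)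
      omega
    have hl : l = -m := by omega
    refine Prod.ext hl (funext fun x => ?_)
    simp only [hgval, hl]
    congr 1
    ring
end

section
/- The injectivization map is an order isomorphism onto injective morphisms: for n, k ≥ 0, the assignment sending a parasimplex morphism f from Λ_k to Λ_n (monotone, f(x+(k+1)) = f(x)+(n+1)) with coordinates (f(0), …, f(k)) to the morphism from Λ_k to Λ_{n+k+1} with coordinates (f(0), f(1)+1, …, f(k)+k), is a well-defined, order-preserving bijection from the set of all morphisms Λ_k → Λ_n onto the set of injective morphisms Λ_k → Λ_{n+k+1}, whose inverse is also order-preserving. -/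
/-- `f` is a morphism of parasimplices from `Λ_k` to `Λ_m`. -/
def IsPara (m k : ℕ) (f : ℤ → ℤ) : Prop :=
  Monotone f ∧ ∀ x : ℤ, f (x + ((k : ℤ) + 1)) = f x + ((m : ℤ) + 1)

lemma strictMono_gap {g : ℤ → ℤ} (hg : StrictMono g) :
    Monotone (fun x => g x - x) := by
  intro x y hxy
  simp only
  have key : ∀ d : ℕ, g x + d ≤ g (x + d) := by
    intro d
    induction d with
    | zero => simp
    | succ m ih =>
      have h1 : g (x + m) < g (x + ((m : ℤ) + 1)) := hg (by omega)
      push_cast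
      push_cast at ih
      omega
  obtain ⟨d, hd⟩ : ∃ d : ℕ, y = x + d := ⟨(y - x).toNat, by omega⟩
  subst hd
  have := key d
  omega

/-- The injectivization map, sending `f : Λ_k → Λ_n` to the morphism `Λ_k → Λ_{n+k+1}`
with coordinates `(f 0, f 1 + 1, …, f k + k)`, is an order isomorphism onto the
injective morphisms. -/
theorem injectivization_order_iso (n k : ℕ) :
    ∃ e : {f : ℤ → ℤ // IsPara n k f} ≃
        {g : ℤ → ℤ // IsPara (n + k + 1) k g ∧ Function.Injective g},
      (∀ f : {f : ℤ → ℤ // IsPara n k f}, ∀ i : ℕ, i ≤ k →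
        (e f).1 ((i : ℤ)) = f.1 ((i : ℤ)) + (i : ℤ)) ∧
      (∀ f f' : {f : ℤ → ℤ // IsPara n k f},
        (∀ x : ℤ, f.1 x ≤ f'.1 x) ↔ ∀ x : ℤ, (e f).1 x ≤ (e f').1 x) := by
  refine ⟨⟨fun f => ⟨fun x => f.1 x + x, ?_, ?_⟩, fun g => ⟨fun x => g.1 x - x, ?_⟩,
      ?_, ?_⟩, ?_, ?_⟩
  · obtain ⟨f, hmono, hper⟩ := f
    constructor
    · intro x y hxy
      have := hmono hxy
      simp only
      omega
    · intro x
      have := hper x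
      push_cast
      omega
  · obtain ⟨f, hmono, hper⟩ := f
    have : StrictMono (fun x => f x + x) := by
      intro x y hxy
      have := hmono hxy.le
      simp only
      omega
    exact this.injective
  · obtain ⟨g, ⟨hmono, hper⟩, hinj⟩ := g
    have hsm : StrictMono g := hmono.strictMono_of_injective hinj
    constructor
    · exact strictMono_gap hsm
    · intro x
      have := hper x
      simp only
      push_cast at this ⊢
      omega
  · intro f; ext x; simp
  · intro g; ext x; simp
  · intro f i hi; rfl
  · intro f f'
    constructor
    · intro h x; have := h x
      show f.1 x + x ≤ f'.1 x + x
      omega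
    · intro h x; have := h x
      have h2 : f.1 x + x ≤ f'.1 x + x := this
      omega
end
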